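/- Let n ≥ 1 and k ≥ 1. In the ring of multivariate polynomials over ℚ in n variables, the elementary symmetric polynomial c_k of degree k satisfies c_k = Σ_{α ⊨ k} (−1)^{α(2)+α(4)+α(6)+⋯} · (h(α)/k!) · s_1^{α(1)} · s_2^{α(2)} ⋯ s_k^{α(k)}, where the sum runs over all partition symbols α of k and s_i denotes the i-th power sum polynomial. -/

import Mathlib

open MvPolynomial

/-- The finite set of partition symbols of `k`: finitely supported functions
`α : ℕ → ℕ` with `α 0 = 0` and `∑ i, i · α i = k`. -/
noncomputable def partitionSymbols (k : ℕ) : Finset (ℕ →₀ ℕ) :=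
  ((Finset.range (k + 1)).finsupp fun _ => Finset.range (k + 1)).filter
    fun α => α 0 = 0 ∧ (α.sum fun i a => i * a) = k

/-- The Cauchy number `h(α) = k! / (∏ i, α i ! · i ^ α i)` of a partition symbol of `k`. -/
noncomputable def cauchyNumber (k : ℕ) (α : ℕ →₀ ℕ) : ℚ :=
  (k.factorial : ℚ) / (α.prod fun i a => (a.factorial : ℚ) * (i : ℚ) ^ a)

lemma mem_partitionSymbols {k : ℕ} {α : ℕ →₀ ℕ} :
    α ∈ partitionSymbols k ↔ α 0 = 0 ∧ (α.sum fun i a => i * a) = k := by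
  constructor
  · intro h; exact (Finset.mem_filter.mp h).2
  · rintro ⟨h0, hs⟩
    refine Finset.mem_filter.mpr ⟨?_, h0, hs⟩
    rw [Finset.mem_finsupp_iff]
    have key : ∀ i ∈ α.support, i ≤ k ∧ α i ≤ k := by
      intro i hi
      have hi1 : α i ≠ 0 := Finsupp.mem_support_iff.mp hi
      have hi0 : i ≠ 0 := by rintro rfl; exact hi1 h0
      have hle : i * α i ≤ k := by
        rw [← hs]
        exact Finset.single_le_sum (f := fun i => i * α i) (fun _ _ => Nat.zero_le _) hi
      exact ⟨le_trans (Nat.le_mul_of_pos_right _ (Nat.pos_of_ne_zero hi1)) hle,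
        le_trans (Nat.le_mul_of_pos_left _ (Nat.pos_of_ne_zero hi0)) hle⟩
    refine ⟨fun i hi => Finset.mem_range.mpr (Nat.lt_succ_of_le (key i hi).1), fun i _ => ?_⟩
    by_cases h : i ∈ α.support
    · exact Finset.mem_range.mpr (Nat.lt_succ_of_le (key i h).2)
    · simp [Finsupp.notMem_support_iff.mp h]

lemma partitionSymbols_zero : partitionSymbols 0 = {0} := by
  ext α
  simp only [Finset.mem_singleton, mem_partitionSymbols]
  constructor
  · rintro ⟨h0, hs⟩
    ext i
    rcases Nat.eq_zero_or_pos i with rfl | hi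
    · simp [h0]
    · by_contra hne
      have hmem : i ∈ α.support := Finsupp.mem_support_iff.mpr fun h => hne (by simp [h])
      have : i * α i ≤ 0 := by
        rw [← hs]
        exact Finset.single_le_sum (f := fun i => i * α i) (fun _ _ => Nat.zero_le _) hmem
      have := Nat.eq_zero_of_le_zero this
      rcases Nat.mul_eq_zero.mp this with h | h
      · omega
      · exact hne (by simp [h])
  · rintro rfl; simp

/-- the summand appearing in the Cauchy/Waring expansion. -/
noncomputable def pterm (n : ℕ) (α : ℕ →₀ ℕ) : MvPolynomial (Fin n) ℚ :=
  (((-1 : ℚ) ^ (α.sum fun i a => if Even i then a else 0)) *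
      (α.prod fun i a => (a.factorial : ℚ) * (i : ℚ) ^ a)⁻¹) •
    (α.prod fun i a => psum (Fin n) ℚ i ^ a)

noncomputable def Ew (n m : ℕ) : MvPolynomial (Fin n) ℚ :=
  ∑ α ∈ partitionSymbols m, pterm n α

lemma Ew_zero (n : ℕ) : Ew n 0 = 1 := by
  rw [Ew, partitionSymbols_zero, Finset.sum_singleton, pterm]
  simp

lemma sub_single_add (α : ℕ →₀ ℕ) (j : ℕ) (h : 1 ≤ α j) :
    α - Finsupp.single j 1 + Finsupp.single j 1 = α := by
  ext i
  rcases eq_or_ne i j with rfl | hne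
  · simp only [Finsupp.add_apply, Finsupp.tsub_apply, Finsupp.single_eq_same]
    omega
  · simp [Finsupp.single_eq_of_ne' (Ne.symm hne)]

lemma add_single_sub (β : ℕ →₀ ℕ) (j : ℕ) :
    β + Finsupp.single j 1 - Finsupp.single j 1 = β := by
  ext i
  rcases eq_or_ne i j with rfl | hne
  · simp only [Finsupp.tsub_apply, Finsupp.add_apply, Finsupp.single_eq_same]; omega
  · simp [Finsupp.single_eq_of_ne (Ne.symm hne)]

lemma sum_mul_add_single (β : ℕ →₀ ℕ) (j : ℕ) :
    ((β + Finsupp.single j 1).sum fun i a => i * a) = (β.sum fun i a => i * a) + j := by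
  rw [Finsupp.sum_add_index' (fun i => mul_zero i) (fun i a b => mul_add i a b),
    Finsupp.sum_single_index (mul_zero j), mul_one]

lemma key_step (n j : ℕ) (hj : 1 ≤ j) (β : ℕ →₀ ℕ) (hβ0 : β 0 = 0) :
    ((j * (β j + 1) : ℕ) : ℚ) • pterm n (β + Finsupp.single j 1)
      = ((-1 : ℚ) ^ (j + 1)) • (psum (Fin n) ℚ j * pterm n β) := by
  classical
  set α := β + Finsupp.single j 1 with hα
  have hαj : α j = β j + 1 := by simp [hα]
  have hαi : ∀ i, i ≠ j → α i = β i := fun i hi => by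
    simp [hα, Finsupp.single_eq_of_ne' (Ne.symm hi)]
  set s : Finset ℕ := insert j β.support with hs
  have hjs : j ∈ s := Finset.mem_insert_self _ _
  have hβs : β.support ⊆ s := Finset.subset_insert _ _
  have hαs : α.support ⊆ s := by
    refine Finsupp.support_add.trans (Finset.union_subset hβs ?_)
    refine Finsupp.support_single_subset.trans ?_
    simp [hs]
  have h0s : ∀ i ∈ s.erase j, (i : ℕ) ≠ 0 := by
    intro i hi
    rcases Finset.mem_erase.mp hi with ⟨hij, his⟩
    rcases Finset.mem_insert.mp his with rfl | hmem
    · exact absurd rfl hij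
    · rintro rfl; exact (Finsupp.mem_support_iff.mp hmem) hβ0
  have hsign0 : ∀ i ∈ s, (if Even i then (0:ℕ) else 0) = 0 := fun i _ => by split <;> rfl
  have hcoef0 : ∀ i ∈ s, ((Nat.factorial 0 : ℚ) * (i : ℚ) ^ (0:ℕ)) = 1 := fun i _ => by simp
  have hpow0 : ∀ i ∈ s, psum (Fin n) ℚ i ^ (0:ℕ) = 1 := fun i _ => pow_zero _
  rw [pterm, pterm,
    Finsupp.sum_of_support_subset α hαs (fun i a => if Even i then a else 0) (fun i _ => by simp),
    Finsupp.sum_of_support_subset β hβs (fun i a => if Even i then a else 0) (fun i _ => by simp),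
    Finsupp.prod_of_support_subset α hαs (fun i a => (Nat.factorial a : ℚ) * (i:ℚ) ^ a) (fun i _ => by simp),
    Finsupp.prod_of_support_subset β hβs (fun i a => (Nat.factorial a : ℚ) * (i:ℚ) ^ a) (fun i _ => by simp),
    Finsupp.prod_of_support_subset α hαs (fun i a => psum (Fin n) ℚ i ^ a) (fun i _ => pow_zero _),
    Finsupp.prod_of_support_subset β hβs (fun i a => psum (Fin n) ℚ i ^ a) (fun i _ => pow_zero _),
    ← Finset.add_sum_erase s _ hjs, ← Finset.add_sum_erase s (fun i => if Even i then β i else 0) hjs,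
    ← Finset.mul_prod_erase s _ hjs, ← Finset.mul_prod_erase s (fun i => (Nat.factorial (β i) : ℚ) * (i:ℚ) ^ (β i)) hjs,
    ← Finset.mul_prod_erase s _ hjs, ← Finset.mul_prod_erase s (fun i => psum (Fin n) ℚ i ^ (β i)) hjs]
  have hsumE : (∑ i ∈ s.erase j, if Even i then α i else 0)
      = ∑ i ∈ s.erase j, if Even i then β i else 0 :=
    Finset.sum_congr rfl fun i hi => by rw [hαi i (Finset.ne_of_mem_erase hi)]
  have hcoefE : (∏ i ∈ s.erase j, (Nat.factorial (α i) : ℚ) * (i:ℚ) ^ (α i))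
      = ∏ i ∈ s.erase j, (Nat.factorial (β i) : ℚ) * (i:ℚ) ^ (β i) :=
    Finset.prod_congr rfl fun i hi => by rw [hαi i (Finset.ne_of_mem_erase hi)]
  have hpowE : (∏ i ∈ s.erase j, psum (Fin n) ℚ i ^ (α i))
      = ∏ i ∈ s.erase j, psum (Fin n) ℚ i ^ (β i) :=
    Finset.prod_congr rfl fun i hi => by rw [hαi i (Finset.ne_of_mem_erase hi)]
  rw [hsumE, hcoefE, hpowE, hαj]
  set Sb := ∑ i ∈ s.erase j, if Even i then β i else 0 with hSb
  set Cb := ∏ i ∈ s.erase j, (Nat.factorial (β i) : ℚ) * (i:ℚ) ^ (β i) with hCb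
  set Pb := ∏ i ∈ s.erase j, psum (Fin n) ℚ i ^ (β i) with hPb
  have hCb0 : Cb ≠ 0 := by
    rw [hCb]
    refine Finset.prod_ne_zero_iff.mpr fun i hi => ?_
    have : (i:ℚ) ≠ 0 := Nat.cast_ne_zero.mpr (h0s i hi)
    positivity
  have hjQ : (j : ℚ) ≠ 0 := Nat.cast_ne_zero.mpr (by omega)
  rw [smul_smul, mul_smul_comm, smul_smul]
  have hpoly : psum (Fin n) ℚ j ^ (β j + 1) * Pb = psum (Fin n) ℚ j * (psum (Fin n) ℚ j ^ (β j) * Pb) := by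
    rw [pow_succ]; ring
  rw [hpoly]
  congr 1
  have hfac : ((β j + 1).factorial : ℚ) = (β j + 1) * (β j).factorial := by
    rw [Nat.factorial_succ]; push_cast; ring
  have hfac0 : ((β j).factorial : ℚ) ≠ 0 := Nat.cast_ne_zero.mpr (Nat.factorial_ne_zero _)
  rcases Nat.even_or_odd j with he | ho
  · have h1 : (if Even j then β j + 1 else 0) = β j + 1 := if_pos he
    have h2 : (if Even j then β j else 0) = β j := if_pos he
    have h3 : ((-1:ℚ)) ^ (j + 1) = -1 := (he.add_one).neg_one_pow
    rw [h1, h2, h3, hfac]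
    rw [pow_succ _ (β j)]
    field_simp
    push_cast
    ring
  · have h1 : (if Even j then β j + 1 else 0) = 0 := if_neg (by simpa using ho)
    have h2 : (if Even j then β j else 0) = 0 := if_neg (by simpa using ho)
    have h3 : ((-1:ℚ)) ^ (j + 1) = 1 := (ho.add_one).neg_one_pow
    rw [h1, h2, h3, hfac]
    rw [pow_succ _ (β j)]
    field_simp
    push_cast
    ring

lemma support_bounds {k : ℕ} {α : ℕ →₀ ℕ} (hα : α ∈ partitionSymbols k) {j : ℕ}
    (hj : j ∈ α.support) : 1 ≤ j ∧ j ≤ k ∧ 1 ≤ α j := by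
  obtain ⟨h0, hs⟩ := mem_partitionSymbols.mp hα
  have h1 : α j ≠ 0 := Finsupp.mem_support_iff.mp hj
  have hj0 : j ≠ 0 := by rintro rfl; exact h1 h0
  have hle : j * α j ≤ k := by
    rw [← hs]
    exact Finset.single_le_sum (f := fun i => i * α i) (fun _ _ => Nat.zero_le _) hj
  refine ⟨by omega, ?_, by omega⟩
  calc j ≤ j * α j := Nat.le_mul_of_pos_right _ (Nat.pos_of_ne_zero h1)
    _ ≤ k := hle

lemma Ew_rec (n k : ℕ) :
    (k : ℚ) • Ew n k =
      ∑ j ∈ Finset.Icc 1 k, ((-1 : ℚ) ^ (j + 1)) • (psum (Fin n) ℚ j * Ew n (k - j)) := by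
  classical
  have step1 : (k:ℚ) • Ew n k
      = ∑ α ∈ partitionSymbols k, ∑ j ∈ α.support, ((j * α j : ℕ) : ℚ) • pterm n α := by
    rw [Ew, Finset.smul_sum]
    refine Finset.sum_congr rfl fun α hα => ?_
    rw [← Finset.sum_smul]
    congr 1
    obtain ⟨h0, hs⟩ := mem_partitionSymbols.mp hα
    conv_lhs => rw [← hs]
    rw [Finsupp.sum]
    push_cast
    rfl
  have step3 : ∀ j ∈ Finset.Icc 1 k, ((-1 : ℚ) ^ (j + 1)) • (psum (Fin n) ℚ j * Ew n (k - j))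
      = ∑ β ∈ partitionSymbols (k - j), ((-1:ℚ)^(j+1)) • (psum (Fin n) ℚ j * pterm n β) := by
    intro j _; rw [Ew, Finset.mul_sum, Finset.smul_sum]
  rw [step1, Finset.sum_congr rfl step3,
    Finset.sum_sigma' (partitionSymbols k) (fun α => α.support)
      (fun α j => ((j * α j : ℕ) : ℚ) • pterm n α),
    Finset.sum_sigma' (Finset.Icc 1 k) (fun j => partitionSymbols (k - j))
      (fun j β => ((-1 : ℚ) ^ (j + 1)) • (psum (Fin n) ℚ j * pterm n β))]
  refine Finset.sum_nbij' (fun p => ⟨p.2, p.1 - Finsupp.single p.2 1⟩)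
    (fun q => ⟨q.2 + Finsupp.single q.1 1, q.1⟩) ?_ ?_ ?_ ?_ ?_
  · rintro ⟨α, j⟩ hp
    dsimp only
    simp only [Finset.mem_sigma] at hp ⊢
    obtain ⟨hα, hjs⟩ := hp
    obtain ⟨hj1, hjk, hαj⟩ := support_bounds hα hjs
    obtain ⟨h0, hs⟩ := mem_partitionSymbols.mp hα
    refine ⟨Finset.mem_Icc.mpr ⟨hj1, hjk⟩, mem_partitionSymbols.mpr ⟨?_, ?_⟩⟩
    · simp [Finsupp.tsub_apply, h0]
    · have hadd := sub_single_add α j hαj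
      have := sum_mul_add_single (α - Finsupp.single j 1) j
      rw [hadd, hs] at this
      omega
  · rintro ⟨j, β⟩ hq
    dsimp only
    simp only [Finset.mem_sigma] at hq ⊢
    obtain ⟨hjk, hβ⟩ := hq
    rw [Finset.mem_Icc] at hjk
    obtain ⟨h0, hs⟩ := mem_partitionSymbols.mp hβ
    have hj0 : j ≠ 0 := by omega
    refine ⟨mem_partitionSymbols.mpr ⟨?_, ?_⟩, ?_⟩
    · simp [Finsupp.add_apply, Finsupp.single_eq_of_ne' hj0, h0]
    · rw [sum_mul_add_single, hs]; omega
    · simp [Finsupp.mem_support_iff, Finsupp.add_apply, Finsupp.single_eq_same]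
  · rintro ⟨α, j⟩ hp
    simp only [Finset.mem_sigma] at hp
    obtain ⟨hα, hjs⟩ := hp
    obtain ⟨_, _, hαj⟩ := support_bounds hα hjs
    dsimp only
    simp [sub_single_add α j hαj]
  · rintro ⟨j, β⟩ _
    dsimp only
    simp [add_single_sub]
  · rintro ⟨α, j⟩ hp
    simp only [Finset.mem_sigma] at hp
    obtain ⟨hα, hjs⟩ := hp
    obtain ⟨hj1, hjk, hαj⟩ := support_bounds hα hjs
    obtain ⟨h0, hs⟩ := mem_partitionSymbols.mp hα
    dsimp only
    have hβ0 : (α - Finsupp.single j 1 : ℕ →₀ ℕ) 0 = 0 := by simp [Finsupp.tsub_apply, h0]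
    have happ : (α - Finsupp.single j 1 : ℕ →₀ ℕ) j + 1 = α j := by
      simp only [Finsupp.tsub_apply, Finsupp.single_eq_same]; omega
    have := key_step n j hj1 (α - Finsupp.single j 1) hβ0
    rw [sub_single_add α j hαj, happ] at this
    exact this

lemma filter_antidiagonal_sum {M : Type*} [AddCommMonoid M] (k : ℕ) (g : ℕ → ℕ → M) :
    ∑ a ∈ Finset.HasAntidiagonal.antidiagonal k with a.1 < k, g a.1 a.2
      = ∑ j ∈ Finset.Icc 1 k, g (k - j) j := by
  refine Finset.sum_nbij' (fun a => a.2) (fun j => (k - j, j)) ?_ ?_ ?_ ?_ ?_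
  · rintro ⟨a, b⟩ h
    simp only [Finset.mem_filter, Finset.HasAntidiagonal.mem_antidiagonal] at h
    simp only [Finset.mem_Icc]
    omega
  · intro j hj
    simp only [Finset.mem_Icc] at hj
    simp only [Finset.mem_filter, Finset.HasAntidiagonal.mem_antidiagonal]
    omega
  · rintro ⟨a, b⟩ h
    simp only [Finset.mem_filter, Finset.HasAntidiagonal.mem_antidiagonal] at h
    have h1 : k - b = a := by omega
    simp [Prod.ext_iff, h1]
  · intro j hj; rfl
  · rintro ⟨a, b⟩ h
    simp only [Finset.mem_filter, Finset.HasAntidiagonal.mem_antidiagonal] at h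
    have : k - b = a := by omega
    simp [this]

lemma ratsmul_eq {n : ℕ} (q : ℚ) (x : MvPolynomial (Fin n) ℚ) : q • x = C q * x :=
  smul_eq_C_mul x q

lemma esymm_eq_Ew (n : ℕ) : ∀ k, esymm (Fin n) ℚ k = Ew n k := by
  intro k
  induction k using Nat.strong_induction_on with
  | _ k ih =>
    rcases Nat.eq_zero_or_pos k with rfl | hk
    · rw [esymm_zero, Ew_zero]
    · have newton := mul_esymm_eq_sum (Fin n) ℚ k
      rw [filter_antidiagonal_sum k
        (fun a b => (-1 : MvPolynomial (Fin n) ℚ) ^ a * esymm (Fin n) ℚ a * psum (Fin n) ℚ b)]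
        at newton
      have hR : (k : MvPolynomial (Fin n) ℚ) * Ew n k =
          (-1) ^ (k + 1) * ∑ j ∈ Finset.Icc 1 k,
            (-1 : MvPolynomial (Fin n) ℚ) ^ (k - j) * esymm (Fin n) ℚ (k - j) * psum (Fin n) ℚ j := by
        have hsmul : (k : MvPolynomial (Fin n) ℚ) * Ew n k = (k : ℚ) • Ew n k := by
          rw [ratsmul_eq]; simp
        rw [hsmul, Ew_rec, Finset.mul_sum]
        refine Finset.sum_congr rfl fun j hj => ?_
        simp only [Finset.mem_Icc] at hj
        rw [← ih (k - j) (by omega), ratsmul_eq]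
        have hC : (C ((-1 : ℚ) ^ (j + 1)) : MvPolynomial (Fin n) ℚ) = (-1) ^ (j + 1) := by
          simp
        rw [hC]
        have hpow : (-1 : MvPolynomial (Fin n) ℚ) ^ (k + 1) * (-1) ^ (k - j) = (-1) ^ (j + 1) := by
          rw [← pow_add]
          have h2 : (k + 1) + (k - j) = (j + 1) + 2 * (k - j) := by omega
          rw [h2, pow_add, pow_mul]
          simp
        rw [← hpow]; ring
      have hcancel : (k : MvPolynomial (Fin n) ℚ) ≠ 0 := by
        exact_mod_cast Nat.cast_ne_zero.mpr (by omega)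
      exact mul_left_cancel₀ hcancel (newton.trans hR.symm)

theorem esymm_eq_sum_partitionSymbols (n k : ℕ) (hn : 1 ≤ n) (hk : 1 ≤ k) :
    esymm (Fin n) ℚ k =
      ∑ α ∈ partitionSymbols k,
        ((-1 : ℚ) ^ (α.sum fun i a => if Even i then a else 0) *
            (cauchyNumber k α / (k.factorial : ℚ))) •
          (α.prod fun i a => psum (Fin n) ℚ i ^ a) := by
  rw [esymm_eq_Ew n k, Ew]
  refine Finset.sum_congr rfl fun α _ => ?_
  rw [pterm]
  congr 2
  rw [cauchyNumber, div_right_comm, div_self (Nat.cast_ne_zero.mpr k.factorial_ne_zero), one_div]
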